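/- In the Banach space C(Ω) of continuous real functions on a compact metric space Ω, for every family X' of nonzero positive continuous linear functionals that is strictly positive separating for C(Ω)₊ \ {0} (i.e., for each f ≥ 0, f ≠ 0 there is x' ∈ X' with x'(f) > 0), there exists a countable subfamily Y' ⊆ X' that is still strictly positive separating for C(Ω)₊ \ {0}. -/

import Mathlib

/-- Halmos–Savage property of `C(Ω)` for a compact metric space `Ω`: every family of
nonzero positive continuous linear functionals which is strictly positive separating for
`C(Ω)₊ \ {0}` has a countable subfamily which is still strictly positive separating. -/
theorem halmos_savage_continuous_functions {Ω : Type*} [MetricSpace Ω] [CompactSpace Ω]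
    (X' : Set (C(Ω, ℝ) →L[ℝ] ℝ))
    (hpos : ∀ x' ∈ X', ∀ f : C(Ω, ℝ), 0 ≤ f → 0 ≤ x' f)
    (hne : ∀ x' ∈ X', x' ≠ 0)
    (hsep : ∀ f : C(Ω, ℝ), 0 ≤ f → f ≠ 0 → ∃ x' ∈ X', 0 < x' f) :
    ∃ Y' ⊆ X', Y'.Countable ∧
      ∀ f : C(Ω, ℝ), 0 ≤ f → f ≠ 0 → ∃ x' ∈ Y', 0 < x' f := by
  classical
  obtain ⟨D, hDc, hDd⟩ := TopologicalSpace.exists_countable_dense Ω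
  set bump : Ω → ℚ → C(Ω, ℝ) := fun p q =>
    ⟨fun x => max ((q : ℝ) - dist x p) 0,
      (continuous_const.sub (continuous_id.dist continuous_const)).max continuous_const⟩
    with hbump
  have bump_apply : ∀ p q x, bump p q x = max ((q : ℝ) - dist x p) 0 := fun _ _ _ => rfl
  have bump_nonneg : ∀ p q, (0 : C(Ω, ℝ)) ≤ bump p q := by
    intro p q
    rw [ContinuousMap.le_def]
    intro x
    exact le_max_right _ _
  have bump_ne : ∀ p (q : ℚ), 0 < q → bump p q ≠ 0 := by
    intro p q hq h
    have h2 := DFunLike.congr_fun h p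
    rw [bump_apply] at h2
    simp only [dist_self, sub_zero, ContinuousMap.zero_apply] at h2
    have : (0:ℝ) < q := by exact_mod_cast hq
    rw [max_eq_left this.le] at h2
    exact this.ne' h2
  set S := D ×ˢ {q : ℚ | 0 < q} with hS
  have key : ∀ s : S, ∃ x' ∈ X', 0 < x' (bump s.1.1 s.1.2) := by
    rintro ⟨⟨p, q⟩, hp, hq⟩
    exact hsep _ (bump_nonneg p q) (bump_ne p q hq)
  choose φ hφX hφpos using key
  have hScount : Countable S := ((hDc.prod (Set.to_countable _))).to_subtype
  refine ⟨Set.range φ, ?_, Set.countable_range φ, ?_⟩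
  · rintro _ ⟨s, rfl⟩
    exact hφX s
  · intro f hf hf0
    obtain ⟨ω, hω⟩ : ∃ ω, f ω ≠ 0 := by
      by_contra h
      push_neg at h
      exact hf0 (ContinuousMap.ext fun x => h x)
    have hfω : 0 < f ω := lt_of_le_of_ne (ContinuousMap.le_def.mp hf ω) (Ne.symm hω)
    -- find a ball on which f > f ω / 2
    have hopen : IsOpen {x | f ω / 2 < f x} := isOpen_lt continuous_const f.continuous
    have hmem : {x | f ω / 2 < f x} ∈ nhds ω :=
      hopen.mem_nhds (by simpa using half_lt_self hfω)
    obtain ⟨δ, hδ, hball⟩ := Metric.mem_nhds_iff.mp hmem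
    obtain ⟨q, hq0, hq⟩ := exists_rat_btwn (half_pos hδ)
    have hq0' : (0:ℝ) < q := hq0
    obtain ⟨p, hpD, hpω⟩ := hDd.exists_dist_lt ω hq0'
    have hs : (⟨(p, q), hpD, by exact_mod_cast hq0'⟩ : S) ∈ (Set.univ : Set S) := trivial
    set s : S := ⟨(p, q), hpD, by exact_mod_cast hq0'⟩ with hsdef
    set x' := φ s with hx'
    have hx'X : x' ∈ X' := hφX s
    set c : ℝ := f ω / (2 * q) with hc
    have hc0 : 0 < c := div_pos hfω (by linarith)
    -- pointwise bound: c • bump p q ≤ f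
    have hdom : c • bump p q ≤ f := by
      rw [ContinuousMap.le_def]
      intro x
      rw [ContinuousMap.smul_apply, bump_apply, smul_eq_mul]
      by_cases hx : dist x p < q
      · have hdx : dist x ω < δ := by
          calc dist x ω ≤ dist x p + dist p ω := dist_triangle x p ω
            _ < q + q := by rw [dist_comm p ω]; exact add_lt_add hx hpω
            _ < δ := by linarith
        have hfx : f ω / 2 < f x := hball (Metric.mem_ball.mpr hdx)
        have hb : max ((q:ℝ) - dist x p) 0 ≤ q :=
          max_le (by linarith [dist_nonneg (x := x) (y := p)]) hq0'.le
        calc c * max ((q:ℝ) - dist x p) 0 ≤ c * q := by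
              exact mul_le_mul_of_nonneg_left hb hc0.le
          _ = f ω / 2 := by rw [hc, div_mul_eq_mul_div, mul_div_mul_right _ _ hq0'.ne']
          _ ≤ f x := hfx.le
      · push_neg at hx
        have : max ((q:ℝ) - dist x p) 0 = 0 := max_eq_right (by linarith)
        rw [this, mul_zero]
        exact ContinuousMap.le_def.mp hf x
    refine ⟨x', ⟨s, rfl⟩, ?_⟩
    have hpos1 : 0 < x' (bump p q) := hφpos s
    have hdiff : (0:ℝ) ≤ x' (f - c • bump p q) := by
      apply hpos x' hx'X
      rw [sub_nonneg]
      exact hdom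
    rw [map_sub, map_smul, sub_nonneg, smul_eq_mul] at hdiff
    calc (0:ℝ) < c * x' (bump p q) := mul_pos hc0 hpos1
      _ ≤ x' f := hdiff
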